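/- Let p > 1 and let φ : ℝ → ℝ be twice continuously differentiable with 0 < φ(ζ) < 1 for all ζ, satisfying φ''(ζ) + (e^{2ζ}/2 − (p+3)/(p−1)) φ'(ζ) + (2(p+1)/(p−1)²) φ(ζ)(1 − φ(ζ)^{p−1}) = 0 for all ζ ∈ ℝ, with φ(ζ) → 1 as ζ → −∞ and φ(ζ) → 0 as ζ → +∞. Then φ'(ζ) < 0 for every ζ ∈ ℝ; in particular, φ is strictly decreasing. -/

import Mathlib

open Real Set Filter

/-- any `C²` solution of the profile ODE with values strictly between 0 and 1
and limits 1 at `−∞`, 0 at `+∞` has strictly negative derivative everywhere; in particular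
it is strictly decreasing. -/
theorem stmt_10 (p : ℝ) (hp : 1 < p)
    (φ : ℝ → ℝ) (hφ : ContDiff ℝ 2 φ)
    (hrange : ∀ ζ : ℝ, 0 < φ ζ ∧ φ ζ < 1)
    (hode : ∀ ζ : ℝ, deriv (deriv φ) ζ
        + (Real.exp (2 * ζ) / 2 - (p + 3) / (p - 1)) * deriv φ ζ
        + (2 * (p + 1) / (p - 1) ^ 2) * φ ζ * (1 - (φ ζ) ^ (p - 1)) = 0)
    (hlim₁ : Tendsto φ atBot (nhds 1)) (hlim₀ : Tendsto φ atTop (nhds 0)) :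
    (∀ ζ : ℝ, deriv φ ζ < 0) ∧ StrictAnti φ := by
  have hp1 : (0:ℝ) < p - 1 := by linarith
  set c : ℝ := (p + 3) / (p - 1) with hc
  have hdiff : Differentiable ℝ φ := hφ.differentiable (by norm_num)
  have hφ' : ContDiff ℝ 1 (deriv φ) := by
    have : ContDiff ℝ ((1:ℕ) + 1) φ := by exact_mod_cast hφ
    exact (contDiff_succ_iff_deriv.mp this).2.2
  have hdiff' : Differentiable ℝ (deriv φ) := hφ'.differentiable one_ne_zero
  set A : ℝ → ℝ := fun ζ => Real.exp (2 * ζ) / 4 - c * ζ with hA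
  have hAd : ∀ ζ, HasDerivAt A (Real.exp (2 * ζ) / 2 - c) ζ := by
    intro ζ
    have h1 : HasDerivAt (fun ζ : ℝ => Real.exp (2 * ζ) / 4) (Real.exp (2 * ζ) * 2 / 4) ζ := by
      have h0 : HasDerivAt (fun ζ : ℝ => Real.exp (2 * ζ)) (Real.exp (2 * ζ) * 2) ζ := by
        simpa using (((hasDerivAt_id ζ).const_mul (2:ℝ)).exp)
      exact h0.div_const 4
    have h2 : HasDerivAt (fun ζ : ℝ => c * ζ) c ζ := by
      simpa using (hasDerivAt_id ζ).const_mul c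
    have h3 := h1.sub h2
    exact h3.congr_deriv (by ring)
  set ψ : ℝ → ℝ := fun ζ => Real.exp (A ζ) * deriv φ ζ with hψ
  have hψd : ∀ ζ, HasDerivAt ψ
      (Real.exp (A ζ) * ((Real.exp (2*ζ)/2 - c) * deriv φ ζ + deriv (deriv φ) ζ)) ζ := by
    intro ζ
    have h := (hAd ζ).exp.mul (hdiff' ζ).hasDerivAt
    exact h.congr_deriv (by ring)
  have hψneg : ∀ ζ, deriv ψ ζ < 0 := by
    intro ζ
    rw [(hψd ζ).deriv]
    have h0 := (hrange ζ).1
    have h1 := (hrange ζ).2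
    have hr : (φ ζ) ^ (p - 1) < 1 := Real.rpow_lt_one h0.le h1 hp1
    have hK : 0 < 2 * (p + 1) / (p - 1) ^ 2 := by positivity
    have hpos : 0 < (2 * (p + 1) / (p - 1) ^ 2) * φ ζ * (1 - (φ ζ) ^ (p - 1)) := by
      have : 0 < 1 - (φ ζ) ^ (p - 1) := by linarith
      positivity
    have hsum : (Real.exp (2*ζ)/2 - c) * deriv φ ζ + deriv (deriv φ) ζ < 0 := by
      have := hode ζ
      linarith
    exact mul_neg_of_pos_of_neg (Real.exp_pos _) hsum
  have hψanti : StrictAnti ψ := strictAnti_of_deriv_neg hψneg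
  have key : ∀ ζ, deriv φ ζ < 0 := by
    intro ζ₀
    by_contra hcon
    push_neg at hcon
    have hψ0 : 0 ≤ ψ ζ₀ := mul_nonneg (Real.exp_pos _).le hcon
    have hpos : ∀ ζ ∈ Iio ζ₀, 0 < deriv φ ζ := by
      intro ζ hζ
      have h2 : 0 < Real.exp (A ζ) * deriv φ ζ := lt_of_le_of_lt hψ0 (hψanti hζ)
      by_contra h'
      push_neg at h'
      nlinarith [Real.exp_pos (A ζ)]
    have hmono : StrictMonoOn φ (Iic ζ₀) := by
      apply strictMonoOn_of_deriv_pos (convex_Iic ζ₀) hdiff.continuous.continuousOn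
      intro ζ hζ
      rw [interior_Iic] at hζ
      exact hpos ζ hζ
    have hlt : φ (ζ₀ - 1) < 1 := (hrange _).2
    have hev : ∀ᶠ ζ in atBot, φ (ζ₀ - 1) < φ ζ := hlim₁.eventually (eventually_gt_nhds hlt)
    obtain ⟨ζ, h1, h2⟩ := (hev.and (eventually_lt_atBot (ζ₀ - 1))).exists
    have : φ ζ < φ (ζ₀ - 1) :=
      hmono (mem_Iic.mpr (by linarith)) (mem_Iic.mpr (by linarith)) h2
    linarith
  exact ⟨key, strictAnti_of_deriv_neg key⟩
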